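/- Let γ_1,…,γ_n ∈ ℤ² ⊂ ℝ² be the weights of the successive oriented edges along a closed path once around a 2-valent signed GKM graph. Then the angle from γ_i to γ_{i+1} (and from γ_n to γ_1) is, for all i, either always represented in (0,π) or always represented in (−π,0); that is, the sequence (γ_1,…,γ_n) is locally convex. Moreover, choosing ε ∈ {±1} such that the angles are measured in the respective interval minimizes the winding number σ(γ_1,…,γ_n,ε); this ε is the preferred orientation. -/
import Mathlib


open Classical

namespace GKMPaper

/-- `ℤ^m`, the weight lattice. -/
abbrev Zm (m : ℕ) := Fin m → ℤ

/-- The relation identifying a vector with its negative. -/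
def pmRel (m : ℕ) (a b : Zm m) : Prop := a = b ∨ a = -b

theorem pmRel_equiv (m : ℕ) : Equivalence (pmRel m) := by
  constructor
  · intro a; exact Or.inl rfl
  · intro a b hab
    rcases hab with hh | hh
    · exact Or.inl hh.symm
    · exact Or.inr (by rw [hh, neg_neg])
  · intro a b c h1 h2
    rcases h1 with h1 | h1 <;> rcases h2 with h2 | h2
    · exact Or.inl (h1.trans h2)
    · exact Or.inr (h1.trans h2)
    · exact Or.inr (by rw [h1, h2])
    · exact Or.inl (by rw [h1, h2, neg_neg])

def pmSetoid (m : ℕ) : Setoid (Zm m) := ⟨pmRel m, pmRel_equiv m⟩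

/-- `ℤ^m / ±1`. -/
def ZmPM (m : ℕ) := Quotient (pmSetoid m)

/-- The projection `ℤ^m → ℤ^m/±1`. -/
def pm {m : ℕ} (a : Zm m) : ZmPM m := Quotient.mk (pmSetoid m) a

/-- Linear independence over `ℤ`. -/
def Indep {m : ℕ} (a b : Zm m) : Prop :=
  ∀ c d : ℤ, c • a + d • b = 0 → c = 0 ∧ d = 0

/-- An abstract graph with finite vertex and edge sets, each edge occurring with
both orientations, and no loops. -/
structure OrGraph : Type 1 where
  V : Type
  E : Type
  fV : Fintype V
  fE : Fintype E
  dV : DecidableEq V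
  dE : DecidableEq E
  src : E → V
  dst : E → V
  rev : E → E
  rev_rev : ∀ e, rev (rev e) = e
  rev_ne : ∀ e, rev e ≠ e
  src_rev : ∀ e, src (rev e) = dst e
  no_loop : ∀ e, src e ≠ dst e

attribute [instance] OrGraph.fV OrGraph.fE OrGraph.dV OrGraph.dE

/-- A connection on a graph. -/
structure Connection (G : OrGraph) where
  t : G.E → G.E → G.E
  src_t : ∀ e f, G.src f = G.src e → G.src (t e f) = G.dst e
  t_self : ∀ e, t e e = G.rev e
  t_inv : ∀ e f, G.src f = G.src e → t (G.rev e) (t e f) = f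

/-- `k`-valence. -/
def OrGraph.Regular (G : OrGraph) (k : ℕ) : Prop :=
  ∀ v : G.V, Fintype.card {e : G.E // G.src e = v} = k

def OrGraph.Adj (G : OrGraph) (v w : G.V) : Prop :=
  ∃ e, G.src e = v ∧ G.dst e = w

def OrGraph.IsConn (G : OrGraph) : Prop :=
  ∀ v w : G.V, Relation.ReflTransGen G.Adj v w

/-- Compatibility of a connection with an unsigned axial function. -/
def UnsignedCompat {m : ℕ} (G : OrGraph) (α : G.E → ZmPM m) (C : Connection G) : Prop :=
  (∀ e f : G.E, G.src f = G.src e → e ≠ f →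
      ∀ a b : Zm m, pm a = α e → pm b = α f → Indep a b) ∧
  (∀ e f : G.E, G.src f = G.src e →
      ∃ (a g : Zm m) (c : ℤ), pm a = α f ∧ pm g = α e ∧ α (C.t e f) = pm (a + c • g)) ∧
  (∀ e : G.E, α (G.rev e) = α e)

/-- `(G, α)` is an (unsigned) abstract GKM graph of valence `k` with labels in `ℤ^m/±1`. -/
def IsGKM {m : ℕ} (G : OrGraph) (k : ℕ) (α : G.E → ZmPM m) : Prop :=
  G.Regular k ∧ G.IsConn ∧ ∃ C : Connection G, UnsignedCompat G α C

/-- Compatibility of a connection with a signed axial function. -/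
def SignedCompat {m : ℕ} (G : OrGraph) (α : G.E → Zm m) (C : Connection G) : Prop :=
  (∀ e f : G.E, G.src f = G.src e → e ≠ f → Indep (α e) (α f)) ∧
  (∀ e f : G.E, G.src f = G.src e → ∃ c : ℤ, α (C.t e f) = α f + c • α e) ∧
  (∀ e : G.E, α (G.rev e) = - α e)

/-- `(G, α)` is a signed abstract GKM graph of valence `k` with labels in `ℤ^m`. -/
def IsSignedGKM {m : ℕ} (G : OrGraph) (k : ℕ) (α : G.E → Zm m) : Prop :=
  G.Regular k ∧ G.IsConn ∧ ∃ C : Connection G, SignedCompat G α C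

/-- Effectivity of an unsigned GKM graph: at every vertex, the labels of the
outgoing edges lift to a generating set of `ℤ^m`. -/
def Effective {m : ℕ} (G : OrGraph) (α : G.E → ZmPM m) : Prop :=
  ∀ v : G.V, ∃ lift : {e : G.E // G.src e = v} → Zm m,
    (∀ e, pm (lift e) = α e.1) ∧ Submodule.span ℤ (Set.range lift) = ⊤

def SignedEffective {m : ℕ} (G : OrGraph) (α : G.E → Zm m) : Prop :=
  ∀ v : G.V,
    Submodule.span ℤ (Set.range (fun e : {e : G.E // G.src e = v} => α e.1)) = ⊤

/-- A graph fibration: a morphism sending vertices to vertices and horizontal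
edges to edges, bijectively from the horizontal edges at `p` to the edges at `π(p)`. -/
structure GraphFib (G B : OrGraph) where
  onV : G.V → B.V
  onE : G.E → B.E
  src_onE : ∀ e, onV (G.src e) ≠ onV (G.dst e) → B.src (onE e) = onV (G.src e)
  dst_onE : ∀ e, onV (G.src e) ≠ onV (G.dst e) → B.dst (onE e) = onV (G.dst e)
  rev_onE : ∀ e, onV (G.src e) ≠ onV (G.dst e) → onE (G.rev e) = B.rev (onE e)

def GraphFib.Vertical {G B : OrGraph} (π : GraphFib G B) (e : G.E) : Prop :=
  π.onV (G.src e) = π.onV (G.dst e)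

def GraphFib.IsFib {G B : OrGraph} (π : GraphFib G B) : Prop :=
  ∀ p : G.V, Function.Bijective
    (fun e : {e : G.E // G.src e = p ∧ ¬ π.Vertical e} =>
      (⟨π.onE e.1, by rw [π.src_onE e.1 e.2.2, e.2.1]⟩ : {f : B.E // B.src f = π.onV p}))

/-- The extra conditions for a (unsigned) GKM fibration, w.r.t. connections `C`, `CB`. -/
def GKMFibCompat {m : ℕ} {G B : OrGraph} (αΓ : G.E → ZmPM m) (αB : B.E → ZmPM m)
    (π : GraphFib G B) (C : Connection G) (CB : Connection B) : Prop :=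
  (∀ e, ¬ π.Vertical e → αΓ e = αB (π.onE e)) ∧
  (∀ e f, G.src f = G.src e → π.Vertical f → π.Vertical (C.t e f)) ∧
  (∀ e f, G.src f = G.src e → ¬ π.Vertical e → ¬ π.Vertical f →
      ¬ π.Vertical (C.t e f) ∧ π.onE (C.t e f) = CB.t (π.onE e) (π.onE f))

/-- `π` is a GKM fibration of unsigned GKM graphs. -/
def IsGKMFib {m : ℕ} {G B : OrGraph} (αΓ : G.E → ZmPM m) (αB : B.E → ZmPM m)
    (π : GraphFib G B) : Prop :=
  π.IsFib ∧ ∃ (C : Connection G) (CB : Connection B),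
    UnsignedCompat G αΓ C ∧ UnsignedCompat B αB CB ∧ GKMFibCompat αΓ αB π C CB

def SignedGKMFibCompat {m : ℕ} {G B : OrGraph} (sΓ : G.E → Zm m) (sB : B.E → Zm m)
    (π : GraphFib G B) (C : Connection G) (CB : Connection B) : Prop :=
  (∀ e, ¬ π.Vertical e → sΓ e = sB (π.onE e)) ∧
  (∀ e f, G.src f = G.src e → π.Vertical f → π.Vertical (C.t e f)) ∧
  (∀ e f, G.src f = G.src e → ¬ π.Vertical e → ¬ π.Vertical f →
      ¬ π.Vertical (C.t e f) ∧ π.onE (C.t e f) = CB.t (π.onE e) (π.onE f))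

/-- `π` is a signed GKM fibration of signed GKM graphs. -/
def IsSignedGKMFib {m : ℕ} {G B : OrGraph} (sΓ : G.E → Zm m) (sB : B.E → Zm m)
    (π : GraphFib G B) : Prop :=
  π.IsFib ∧ ∃ (C : Connection G) (CB : Connection B),
    SignedCompat G sΓ C ∧ SignedCompat B sB CB ∧ SignedGKMFibCompat sΓ sB π C CB

/-- `(π, ft)` is a fiberwise signed fibration: `ft` is a lift of `αΓ` on the
vertical edges, satisfying the congruence condition w.r.t. suitable connections. -/
def IsFiberwiseSigned {m : ℕ} {G B : OrGraph} (αΓ : G.E → ZmPM m) (αB : B.E → ZmPM m)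
    (π : GraphFib G B) (ft : G.E → Zm m) : Prop :=
  π.IsFib ∧
  (∀ e, π.Vertical e → pm (ft e) = αΓ e) ∧
  (∀ e, π.Vertical e → ft (G.rev e) = - ft e) ∧
  ∃ (C : Connection G) (CB : Connection B),
    UnsignedCompat G αΓ C ∧ UnsignedCompat B αB CB ∧ GKMFibCompat αΓ αB π C CB ∧
    ∀ e f, G.src f = G.src e → π.Vertical f →
      ∃ (g : Zm m) (c : ℤ), pm g = αΓ e ∧ ft (C.t e f) = ft f + c • g

/-- Isomorphism of unsigned GKM graphs. -/
structure GKMIso {m : ℕ} (G : OrGraph) (α : G.E → ZmPM m)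
    (G' : OrGraph) (α' : G'.E → ZmPM m) : Type where
  fV : G.V ≃ G'.V
  fE : G.E ≃ G'.E
  φ : Zm m ≃ₗ[ℤ] Zm m
  src_comm : ∀ e, G'.src (fE e) = fV (G.src e)
  dst_comm : ∀ e, G'.dst (fE e) = fV (G.dst e)
  rev_comm : ∀ e, fE (G.rev e) = G'.rev (fE e)
  lab : ∀ (e : G.E) (a : Zm m), pm a = α e → α' (fE e) = pm (φ a)

/-- Isomorphism of signed GKM graphs. -/
structure SignedGKMIso {m : ℕ} (G : OrGraph) (α : G.E → Zm m)
    (G' : OrGraph) (α' : G'.E → Zm m) : Type where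
  fV : G.V ≃ G'.V
  fE : G.E ≃ G'.E
  φ : Zm m ≃ₗ[ℤ] Zm m
  src_comm : ∀ e, G'.src (fE e) = fV (G.src e)
  dst_comm : ∀ e, G'.dst (fE e) = fV (G.dst e)
  rev_comm : ∀ e, fE (G.rev e) = G'.rev (fE e)
  lab : ∀ e, α' (fE e) = φ (α e)

/-- Equivalence of fiberwise signed fibrations over the same base (identity on `ℤ^m`). -/
structure FSFEquiv {m : ℕ} {G B G' : OrGraph}
    (αΓ : G.E → ZmPM m) (π : GraphFib G B) (ft : G.E → Zm m)
    (αΓ' : G'.E → ZmPM m) (π' : GraphFib G' B) (ft' : G'.E → Zm m) : Type where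
  fV : G.V ≃ G'.V
  fE : G.E ≃ G'.E
  src_comm : ∀ e, G'.src (fE e) = fV (G.src e)
  dst_comm : ∀ e, G'.dst (fE e) = fV (G.dst e)
  rev_comm : ∀ e, fE (G.rev e) = G'.rev (fE e)
  lab : ∀ e, αΓ' (fE e) = αΓ e
  baseV : ∀ p, π'.onV (fV p) = π.onV p
  baseE : ∀ e, ¬ π.Vertical e → π'.onE (fE e) = π.onE e
  fiblab : ∀ e, π.Vertical e → ft' (fE e) = ft e

/-- Equivalence of signed GKM fibrations over the same base (identity on `ℤ^m`). -/
structure SFEquiv {m : ℕ} {G B G' : OrGraph}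
    (sΓ : G.E → Zm m) (π : GraphFib G B)
    (sΓ' : G'.E → Zm m) (π' : GraphFib G' B) : Type where
  fV : G.V ≃ G'.V
  fE : G.E ≃ G'.E
  src_comm : ∀ e, G'.src (fE e) = fV (G.src e)
  dst_comm : ∀ e, G'.dst (fE e) = fV (G.dst e)
  rev_comm : ∀ e, fE (G.rev e) = G'.rev (fE e)
  lab : ∀ e, sΓ' (fE e) = sΓ e
  baseV : ∀ p, π'.onV (fV p) = π.onV p
  baseE : ∀ e, ¬ π.Vertical e → π'.onE (fE e) = π.onE e

/-- Realizing `ℤ²` inside `ℝ² = ℂ`. -/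
noncomputable def toC (a : Zm 2) : ℂ := (a 0 : ℝ) + (a 1 : ℝ) * Complex.I

def cross (a b : ℂ) : ℝ := a.re * b.im - a.im * b.re

/-- A vertex of a signed GKM graph with labels in `ℤ²` is interior if the cone
spanned by the labels of the edges emanating from it is all of `ℝ²`. -/
def InteriorVtx (G : OrGraph) (α : G.E → Zm 2) (p : G.V) : Prop :=
  ∀ x : ℂ, ∃ c : G.E → ℝ, (∀ e, 0 ≤ c e) ∧
    x = ∑ e ∈ Finset.univ.filter (fun e : G.E => G.src e = p), c e • toC (α e)

/-- The angle from `w` to `w'`, represented in `[0, 2π)` if `ε = true`,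
and in `(-2π, 0]` if `ε = false`. -/
noncomputable def angTo (ε : Bool) (w w' : ℂ) : ℝ :=
  if ε then (if (w' / w).arg < 0 then (w' / w).arg + 2 * Real.pi else (w' / w).arg)
  else (if 0 < (w' / w).arg then (w' / w).arg - 2 * Real.pi else (w' / w).arg)

/-- The winding number of a cyclic sequence of vectors w.r.t. the orientation `ε`. -/
noncomputable def winding {nn : ℕ} [NeZero nn] (w : ZMod nn → ℂ) (ε : Bool) : ℝ :=
  (1 / (2 * Real.pi)) * ∑ i : ZMod nn, |angTo ε (w i) (w (i + 1))|

def LocallyConvex {nn : ℕ} (w : ZMod nn → ℂ) : Prop :=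
  (∀ i, angTo true (w i) (w (i + 1)) ∈ Set.Ioo 0 Real.pi) ∨
  (∀ i, angTo false (w i) (w (i + 1)) ∈ Set.Ioo (-Real.pi) 0)

/-- `ε` is the preferred orientation of the locally convex sequence `w`. -/
def Preferred {nn : ℕ} (w : ZMod nn → ℂ) (ε : Bool) : Prop :=
  (ε = true ∧ ∀ i, angTo true (w i) (w (i + 1)) ∈ Set.Ioo 0 Real.pi) ∨
  (ε = false ∧ ∀ i, angTo false (w i) (w (i + 1)) ∈ Set.Ioo (-Real.pi) 0)

/-- `P` lists the vertices of a strictly convex polygon in cyclic order. -/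
def ConvexCyclic {nn : ℕ} (P : ZMod nn → ℂ) : Prop :=
  (∀ i j, j ≠ i → j ≠ i + 1 → 0 < cross (P (i + 1) - P i) (P j - P i)) ∨
  (∀ i j, j ≠ i → j ≠ i + 1 → cross (P (i + 1) - P i) (P j - P i) < 0)

def SubAdj (G : OrGraph) (S : Set G.E) (v w : G.V) : Prop :=
  ∃ e ∈ S, G.src e = v ∧ G.dst e = w

/-- `S` is (the edge set of) a connected `2`-valent signed GKM subgraph of `(G, α)`. -/
def IsSigned2ValentSub (G : OrGraph) (α : G.E → Zm 2) (S : Set G.E) : Prop :=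
  S.Nonempty ∧
  (∀ e ∈ S, G.rev e ∈ S) ∧
  (∀ v : G.V, (∃ e ∈ S, G.src e = v) → Nat.card {e : G.E // e ∈ S ∧ G.src e = v} = 2) ∧
  (∀ v w : G.V, (∃ e ∈ S, G.src e = v) → (∃ e ∈ S, G.src e = w) →
      Relation.ReflTransGen (SubAdj G S) v w) ∧
  ∃ T : G.E → G.E → G.E,
    (∀ e f, e ∈ S → f ∈ S → G.src f = G.src e → T e f ∈ S ∧ G.src (T e f) = G.dst e) ∧
    (∀ e, e ∈ S → T e e = G.rev e) ∧
    (∀ e f, e ∈ S → f ∈ S → G.src f = G.src e → T (G.rev e) (T e f) = f) ∧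
    (∀ e f, e ∈ S → f ∈ S → G.src f = G.src e → ∃ c : ℤ, α (T e f) = α f + c • α e)

/-- A `2`-valent signed GKM subgraph of polytope type: it is a cycle realized by the
boundary edges of a simple convex `2`-polytope, with labels representing the slopes. -/
def IsPolytopeTypeSub (G : OrGraph) (α : G.E → Zm 2) (S : Set G.E) : Prop :=
  IsSigned2ValentSub G α S ∧
  ∃ np : ℕ, 3 ≤ np ∧
    ∃ (cyc : ZMod np → G.E) (P : ZMod np → ℂ) (t : ZMod np → ℝ),
      (∀ i, cyc i ∈ S) ∧
      (∀ ed ∈ S, ∃ i, ed = cyc i ∨ ed = G.rev (cyc i)) ∧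
      (∀ i, G.dst (cyc i) = G.src (cyc (i + 1))) ∧
      ConvexCyclic P ∧
      (∀ i, 0 < t i) ∧
      (∀ i, P (i + 1) - P i = t i • toC (α (cyc i)))

/-- A fibration over an `n`-gon base is of product type if the lifts of a path
once around the base are closed. -/
def ProductType {G B : OrGraph} (π : GraphFib G B) {nn : ℕ} (eB : ZMod nn → B.E) : Prop :=
  ∃ l : ZMod nn → G.E,
    ∀ i, ¬ π.Vertical (l i) ∧ π.onE (l i) = eB i ∧ G.dst (l i) = G.src (l (i + 1))

/-- `ℤ`-indexed `n`-gon data for a `2`-valent base graph. -/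
structure ZGonData (B : OrGraph) (n : ℕ) where
  v : ℤ → B.V
  eB : ℤ → B.E
  v_per : ∀ i, v (i + n) = v i
  e_per : ∀ i, eB (i + n) = eB i
  src_e : ∀ i, B.src (eB i) = v i
  dst_e : ∀ i, B.dst (eB i) = v (i + 1)
  v_inj : ∀ i j : ℤ, 0 ≤ i → i < n → 0 ≤ j → j < n → v i = v j → i = j
  v_surj : ∀ w : B.V, ∃ i : ℤ, v i = w
  e_cover : ∀ ed : B.E, ∃ i : ℤ, ed = eB i ∨ ed = B.rev (eB i)

/-- A choice of sign representatives `γ_i` of the base labels with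
`γ_i ≡ -γ_{i+2} (mod γ_{i+1})` for all `i ∈ ℤ`. -/
structure GammaData {B : OrGraph} {n : ℕ} (αB : B.E → ZmPM 2) (D : ZGonData B n) where
  γ : ℤ → Zm 2
  lift : ∀ i, pm (γ i) = αB (D.eB i)
  cong : ∀ i, ∃ c : ℤ, γ i + γ (i + 2) = c • γ (i + 1)

/-- A fiberwise signed `3`-valent GKM fibration over `(B, αB)`. -/
structure FSFOver (B : OrGraph) (αB : B.E → ZmPM 2) : Type 1 where
  G : OrGraph
  αΓ : G.E → ZmPM 2
  hΓ : IsGKM G 3 αΓ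
  π : GraphFib G B
  ft : G.E → Zm 2
  isfs : IsFiberwiseSigned αΓ αB π ft

def FSFOver.Equiv {B : OrGraph} {αB : B.E → ZmPM 2} (F F' : FSFOver B αB) : Prop :=
  Nonempty (FSFEquiv F.αΓ F.π F.ft F'.αΓ F'.π F'.ft)

/-- A signed `3`-valent GKM fibration over the signed graph `(B, sB)`. -/
structure SFOver (B : OrGraph) (sB : B.E → Zm 2) : Type 1 where
  G : OrGraph
  sΓ : G.E → Zm 2
  hΓ : IsSignedGKM G 3 sΓ
  π : GraphFib G B
  issf : IsSignedGKMFib sΓ sB π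

def SFOver.Equiv {B : OrGraph} {sB : B.E → Zm 2} (F F' : SFOver B sB) : Prop :=
  Nonempty (SFEquiv F.sΓ F.π F'.sΓ F'.π)

/-- The fibration `F` realizes the classification datum `([k], η)` w.r.t. the fixed data. -/
def RealizesFS {B : OrGraph} {αB : B.E → ZmPM 2} {n : ℕ} (D : ZGonData B n)
    (Γd : GammaData αB D) (F : FSFOver B αB) (k : ZMod n → ℤ) (η : Bool) : Prop :=
  (η = false ↔ ProductType F.π (fun i : ZMod n => D.eB i.val)) ∧
  ∃ (gE : ℤ → F.G.E) (αf : ℤ → Zm 2) (kk : ℤ → ℤ),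
    (∀ i, F.π.Vertical (gE i)) ∧
    (∀ i, F.π.onV (F.G.src (gE i)) = D.v i) ∧
    (∀ i, gE (i + n) = gE i ∨ gE (i + n) = F.G.rev (gE i)) ∧
    (∀ i, pm (αf i) = F.αΓ (gE i)) ∧
    (∀ i, ∃ c : ℤ, αf (i + 1) = αf i + c • Γd.γ i) ∧
    (∀ i, αf i = kk i • Γd.γ (i - 1) - kk (i - 1) • Γd.γ i) ∧
    (∀ i, kk i ≠ 0) ∧
    (∀ i : ZMod n, k i = kk i.val)

/-- The signed fibration `F` realizes the classification datum `([k], η)`. -/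
def RealizesS {B : OrGraph} (sB : B.E → Zm 2) {αB : B.E → ZmPM 2} {n : ℕ}
    (D : ZGonData B n) (Γd : GammaData αB D) (F : SFOver B sB)
    (k : ZMod n → ℤ) (η : Bool) : Prop :=
  (η = false ↔ ProductType F.π (fun i : ZMod n => D.eB i.val)) ∧
  ∃ (gE : ℤ → F.G.E) (αf : ℤ → Zm 2) (kk : ℤ → ℤ),
    (∀ i, F.π.Vertical (gE i)) ∧
    (∀ i, F.π.onV (F.G.src (gE i)) = D.v i) ∧
    (∀ i, gE (i + n) = gE i ∨ gE (i + n) = F.G.rev (gE i)) ∧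
    (∀ i, pm (αf i) = pm (F.sΓ (gE i))) ∧
    (∀ i, ∃ c : ℤ, αf (i + 1) = αf i + c • Γd.γ i) ∧
    (∀ i, αf i = kk i • Γd.γ (i - 1) - kk (i - 1) • Γd.γ i) ∧
    (∀ i, kk i ≠ 0) ∧
    (∀ i : ZMod n, k i = kk i.val)

def KRel (n : ℕ) (a b : {k : ZMod n → ℤ // ∀ i, k i ≠ 0}) : Prop :=
  a.1 = b.1 ∨ a.1 = - b.1

/-- `((ℤ∖{0})^n)/±1`. -/
def KClass (n : ℕ) := Quot (KRel n)

/-- The Section 7 setting: a signed GKM fibration of twisted type of a `3`-valent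
signed GKM graph `Γ` over `B`, the boundary of a 2-dimensional Delzant polytope with
`n` vertices, with `Γ` having `n-1` interior vertices; with the basic edges `f i`, `h i`
over `e i` and the fiber edges `g i`. -/
structure Section7 : Type 1 where
  n : ℕ
  hn : 3 ≤ n
  G : OrGraph
  B : OrGraph
  aG : G.E → Zm 2
  aB : B.E → Zm 2
  hG : IsSignedGKM G 3 aG
  hB : IsSignedGKM B 2 aB
  π : GraphFib G B
  hfib : IsSignedGKMFib aG aB π
  v : ZMod n → B.V
  e : ZMod n → B.E
  v_bij : Function.Bijective v
  src_e : ∀ i, B.src (e i) = v i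
  dst_e : ∀ i, B.dst (e i) = v (i + 1)
  e_cover : ∀ ed : B.E, ∃ i, ed = e i ∨ ed = B.rev (e i)
  P : ZMod n → ℂ
  tl : ZMod n → ℝ
  tl_pos : ∀ i, 0 < tl i
  polygon : ConvexCyclic P
  slope : ∀ i, P (i + 1) - P i = tl i • toC (aB (e i))
  delzant : ∀ i, (aB (e (i - 1)) 0) * (aB (e i) 1) - (aB (e (i - 1)) 1) * (aB (e i) 0) = 1 ∨
                 (aB (e (i - 1)) 0) * (aB (e i) 1) - (aB (e (i - 1)) 1) * (aB (e i) 0) = -1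
  f : ZMod n → G.E
  h : ZMod n → G.E
  g : ZMod n → G.E
  f_horiz : ∀ i, ¬ π.Vertical (f i)
  h_horiz : ∀ i, ¬ π.Vertical (h i)
  f_over : ∀ i, π.onE (f i) = e i
  h_over : ∀ i, π.onE (h i) = e i
  f_ne_h : ∀ i, f i ≠ h i
  g_vert : ∀ i, π.Vertical (g i)
  g_src : ∀ i, G.src (g i) = G.src (f i)
  g_dst : ∀ i, G.dst (g i) = G.src (h i)
  chain_f : ∀ i : ZMod n, i + 1 ≠ 0 → G.dst (f i) = G.src (f (i + 1))
  chain_h : ∀ i : ZMod n, i + 1 ≠ 0 → G.dst (h i) = G.src (h (i + 1))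
  twist_f : G.dst (f (-1)) = G.src (h 0)
  twist_h : G.dst (h (-1)) = G.src (f 0)
  k : ZMod n → ℤ
  k_ne : ∀ i, k i ≠ 0
  fiberweight : ∀ i, aG (g i) =
    k i • aB (e (i - 1)) - (if i = 0 then - k (i - 1) else k (i - 1)) • aB (e i)
  interior_count : Nat.card {p : G.V // InteriorVtx G aG p} = n - 1

/-- The type II signed structure: the signs of the labels of every second pair
of basic edges are reversed. -/
noncomputable def Section7.alphaII (S : Section7) : S.G.E → Zm 2 :=
  fun ed =>
    if ∃ i : ZMod S.n, Odd i.val ∧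
        (ed = S.f i ∨ ed = S.h i ∨ ed = S.G.rev (S.f i) ∨ ed = S.G.rev (S.h i))
    then - S.aG ed else S.aG ed


private def det2 (a b : Zm 2) : ℤ := a 0 * b 1 - a 1 * b 0

private lemma indep_det2 {a b : Zm 2} (h : Indep a b) : det2 a b ≠ 0 := by
  intro hd
  have hd' : a 0 * b 1 - a 1 * b 0 = 0 := hd
  have e1 : (b 1) • a + (-(a 1)) • b = 0 := by
    funext j; fin_cases j <;>
      simp only [Pi.add_apply, Pi.smul_apply, smul_eq_mul, Pi.zero_apply, Fin.isValue, Fin.mk_zero, Fin.mk_one] <;>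
      linarith
  have h1 := h _ _ e1
  have e2 : (b 0) • a + (-(a 0)) • b = 0 := by
    funext j; fin_cases j <;>
      simp only [Pi.add_apply, Pi.smul_apply, smul_eq_mul, Pi.zero_apply, Fin.isValue, Fin.mk_zero, Fin.mk_one] <;>
      linarith
  have h2 := h _ _ e2
  have e3 : (1 : ℤ) • a + (0 : ℤ) • b = 0 := by
    funext j; fin_cases j <;>
      simp only [Pi.add_apply, Pi.smul_apply, smul_eq_mul, Pi.zero_apply, Fin.isValue, Fin.mk_zero, Fin.mk_one] <;>
      linarith [h1.1, h1.2, h2.1, h2.2]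
  exact one_ne_zero (h _ _ e3).1

private lemma cross_toC (a b : Zm 2) : cross (toC a) (toC b) = (det2 a b : ℝ) := by
  simp only [cross, toC, det2, Complex.add_re, Complex.ofReal_re, Complex.mul_re,
    Complex.I_re, Complex.I_im, Complex.ofReal_im, Complex.add_im, Complex.mul_im]
  push_cast
  ring

private lemma toC_ne_zero_of_det2_left {a b : Zm 2} (h : det2 a b ≠ 0) : toC a ≠ 0 := by
  intro h0
  apply h
  have h1 : (a 0 : ℝ) = 0 := by
    have := congrArg Complex.re h0
    simpa [toC] using this
  have h2 : (a 1 : ℝ) = 0 := by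
    have := congrArg Complex.im h0
    simpa [toC] using this
  have h1' : a 0 = 0 := by exact_mod_cast h1
  have h2' : a 1 = 0 := by exact_mod_cast h2
  simp [det2, h1', h2']

private lemma cross_div_im (w w' : ℂ) : (w' / w).im = cross w w' / Complex.normSq w := by
  rw [Complex.div_im]
  unfold cross
  ring

private lemma angTo_true_mem {w w' : ℂ} (h : 0 < (w' / w).im) :
    angTo true w w' ∈ Set.Ioo 0 Real.pi := by
  have h0 : 0 ≤ (w' / w).arg := Complex.arg_nonneg_iff.2 h.le
  have hne0 : (w' / w).arg ≠ 0 := fun hc => by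
    have := (Complex.arg_eq_zero_iff.1 hc).2; linarith
  have hlt : (w' / w).arg < Real.pi :=
    lt_of_le_of_ne (Complex.arg_le_pi _)
      (fun hc => by have := (Complex.arg_eq_pi_iff.1 hc).2; linarith)
  have heq : angTo true w w' = (w' / w).arg := by
    simp only [angTo]
    rw [if_pos trivial, if_neg (not_lt.2 h0)]
  rw [heq]
  exact ⟨lt_of_le_of_ne h0 (Ne.symm hne0), hlt⟩

private lemma angTo_false_mem {w w' : ℂ} (h : (w' / w).im < 0) :
    angTo false w w' ∈ Set.Ioo (-Real.pi) 0 := by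
  have h0 : (w' / w).arg < 0 := Complex.arg_neg_iff.2 h
  have heq : angTo false w w' = (w' / w).arg := by
    simp only [angTo]
    rw [if_neg (by simp), if_neg (not_lt.2 h0.le)]
  rw [heq]
  exact ⟨Complex.neg_pi_lt_arg _, h0⟩

private lemma abs_angTo_true_le {w w' : ℂ} (h : angTo true w w' ∈ Set.Ioo 0 Real.pi)
    (ε' : Bool) : |angTo true w w'| ≤ |angTo ε' w w'| := by
  cases ε' with
  | true => exact le_refl _
  | false =>
    have hpi := Real.pi_pos
    have hθgt : -Real.pi < (w' / w).arg := Complex.neg_pi_lt_arg _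
    by_cases hneg : (w' / w).arg < 0
    · exfalso
      have heq : angTo true w w' = (w' / w).arg + 2 * Real.pi := by
        simp only [angTo]; rw [if_pos trivial, if_pos hneg]
      rw [heq] at h
      obtain ⟨h1, h2⟩ := h
      linarith
    · have h1 : angTo true w w' = (w' / w).arg := by
        simp only [angTo]; rw [if_pos trivial, if_neg hneg]
      rw [h1] at h ⊢
      obtain ⟨hpos, hlt⟩ := h
      have h2 : angTo false w w' = (w' / w).arg - 2 * Real.pi := by
        simp only [angTo]; rw [if_neg (by simp), if_pos hpos]
      rw [h2, abs_of_pos hpos, abs_of_neg (by linarith)]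
      linarith

private lemma abs_angTo_false_le {w w' : ℂ} (h : angTo false w w' ∈ Set.Ioo (-Real.pi) 0)
    (ε' : Bool) : |angTo false w w'| ≤ |angTo ε' w w'| := by
  cases ε' with
  | false => exact le_refl _
  | true =>
    have hpi := Real.pi_pos
    have hθle : (w' / w).arg ≤ Real.pi := Complex.arg_le_pi _
    have hθgt : -Real.pi < (w' / w).arg := Complex.neg_pi_lt_arg _
    by_cases hpos : 0 < (w' / w).arg
    · exfalso
      have heq : angTo false w w' = (w' / w).arg - 2 * Real.pi := by
        simp only [angTo]; rw [if_neg (by simp), if_pos hpos]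
      rw [heq] at h
      obtain ⟨h1, h2⟩ := h
      linarith
    · have h1 : angTo false w w' = (w' / w).arg := by
        simp only [angTo]; rw [if_neg (by simp), if_neg hpos]
      rw [h1] at h ⊢
      obtain ⟨hgt, hneg⟩ := h
      have h2 : angTo true w w' = (w' / w).arg + 2 * Real.pi := by
        simp only [angTo]; rw [if_pos trivial, if_pos hneg]
      rw [h2, abs_of_neg hneg, abs_of_pos (by linarith)]
      linarith


/-- the weights along a closed path once around a 2-valent signed GKM
graph form a locally convex sequence, and the preferred orientation minimizes the
winding number. -/
theorem statement12 (G : OrGraph) (α : G.E → Zm 2) (hG : IsSignedGKM G 2 α)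
    (nn : ℕ) [NeZero nn]
    (p : ZMod nn → G.V) (c : ZMod nn → G.E)
    (hpinj : Function.Injective p) (hpsurj : Function.Surjective p)
    (hsrc : ∀ i, G.src (c i) = p i) (hdst : ∀ i, G.dst (c i) = p (i + 1)) :
    LocallyConvex (fun i => toC (α (c i))) ∧
    ∀ ε : Bool, Preferred (fun i => toC (α (c i))) ε →
      ∀ ε' : Bool,
        winding (fun i => toC (α (c i))) ε ≤ winding (fun i => toC (α (c i))) ε' := by
  obtain ⟨hreg, -, C, hindep, hct, hrevα⟩ := hG
  have hdst_rev : ∀ e, G.dst (G.rev e) = G.src e := by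
    intro e; rw [← G.src_rev (G.rev e), G.rev_rev]
  have tinj : ∀ e f f', G.src f = G.src e → G.src f' = G.src e →
      C.t e f = C.t e f' → f = f' := by
    intro e f f' hf hf' h
    have h1 := C.t_inv e f hf
    have h2 := C.t_inv e f' hf'
    rw [← h1, ← h2, h]
  have two_edges : ∀ (v : G.V) (a b g : G.E), G.src a = v → G.src b = v →
      G.src g = v → a ≠ b → g = a ∨ g = b := by
    intro v a b g ha hb hg hab
    by_contra hcon
    push_neg at hcon
    have h3 : 2 < Fintype.card {e : G.E // G.src e = v} := by
      refine Fintype.two_lt_card_iff.2 ⟨⟨a, ha⟩, ⟨b, hb⟩, ⟨g, hg⟩, ?_, ?_, ?_⟩ <;>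
        simp only [ne_eq, Subtype.mk.injEq]
      · exact hab
      · exact fun h => hcon.1 h.symm
      · exact fun h => hcon.2 h.symm
    rw [hreg v] at h3
    omega
  have hnn1 : nn ≠ 1 := by
    intro h1
    subst h1
    apply G.no_loop (c 0)
    have h01 : (0 + 1 : ZMod 1) = 0 := by decide
    rw [hsrc 0, hdst 0, h01]
  -- no backtracking
  have noback : ∀ i, c (i + 1) ≠ G.rev (c i) := by
    intro i hback
    have hp2 : p (i + 1 + 1) = p i := by
      rw [← hdst (i + 1), hback, hdst_rev, hsrc]
    have hii := hpinj hp2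
    have h2 : (2 : ZMod nn) = 0 := by
      have h' : i + 2 = i + 0 := by
        rw [add_zero, show i + 2 = i + 1 + 1 from by ring]
        exact hii
      exact add_left_cancel h'
    have hdvd : nn ∣ 2 := by
      have h2' : ((2 : ℕ) : ZMod nn) = 0 := by exact_mod_cast h2
      exact (ZMod.natCast_eq_zero_iff 2 nn).1 h2'
    have hnn2 : nn = 2 := by
      rcases (Nat.dvd_prime Nat.prime_two).1 hdvd with h | h
      · exact absurd h hnn1
      · exact h
    subst hnn2
    -- two vertices: derive a contradiction from the GKM structure
    have hsrce : G.src (c i) = p i := hsrc i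
    have hdste : G.dst (c i) = p (i + 1) := hdst i
    have hcard : 1 < Fintype.card {ed : G.E // G.src ed = p i} := by rw [hreg]; omega
    obtain ⟨⟨f, hf⟩, hfne⟩ := Fintype.exists_ne_of_one_lt_card hcard ⟨c i, hsrce⟩
    have hfe : f ≠ c i := fun h => hfne (Subtype.ext h)
    have hvert : ∀ w : G.V, w = p i ∨ w = p (i + 1) := by
      intro w
      obtain ⟨j, hj⟩ := hpsurj w
      have h01 : ∀ x : ZMod 2, x = 0 ∨ x = 1 := by decide
      rcases h01 (j - i) with hx | hx
      · left; rw [← hj]; congr 1; exact (sub_eq_zero.1 hx)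
      · right; rw [← hj]; congr 1
        rw [← hx]; ring
    have hdstf : G.dst f = p (i + 1) := by
      rcases hvert (G.dst f) with h | h
      · exact absurd (hf.trans h.symm) (G.no_loop f)
      · exact h
    have hrevef : G.rev (c i) ≠ G.rev f := by
      intro h
      apply hfe
      rw [← G.rev_rev f, ← h, G.rev_rev]
    have hsf : G.src f = G.src (c i) := hf.trans hsrce.symm
    have htsrc : G.src (C.t (c i) f) = p (i + 1) := by
      rw [C.src_t (c i) f hsf, hdste]
    have ht := two_edges (p (i + 1)) (G.rev (c i)) (G.rev f) (C.t (c i) f)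
      (by rw [G.src_rev]; exact hdste) (by rw [G.src_rev]; exact hdstf) htsrc hrevef
    have htne : C.t (c i) f ≠ G.rev (c i) := by
      intro h
      exact hfe (tinj (c i) f (c i) hsf rfl (by rw [h, ← C.t_self (c i)]))
    have htf : C.t (c i) f = G.rev f := ht.resolve_left htne
    obtain ⟨d, hd⟩ := hct (c i) f hsf
    rw [htf, hrevα] at hd
    have hind : Indep (α (c i)) (α f) := hindep (c i) f hsf (Ne.symm hfe)
    have hz : d • α (c i) + (2 : ℤ) • α f = 0 := by
      funext j
      have := congrFun hd j
      simp only [Pi.add_apply, Pi.neg_apply, Pi.smul_apply, smul_eq_mul,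
        Pi.zero_apply] at this ⊢
      linarith
    exact two_ne_zero (hind d 2 hz).2
  have noback' : ∀ i, G.rev (c i) ≠ c (i + 1) := fun i => Ne.symm (noback i)
  have rev_src : ∀ i, G.src (G.rev (c i)) = p (i + 1) := fun i => by
    rw [G.src_rev, hdst]
  -- the recursion α (c (i+2)) = - α (c i) + d • α (c (i+1))
  have hstep : ∀ i, ∃ d : ℤ, α (c (i + 1 + 1)) = -α (c i) + d • α (c (i + 1)) := by
    intro i
    have hsrcf : G.src (G.rev (c i)) = G.src (c (i + 1)) := by rw [hsrc, rev_src]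
    obtain ⟨d, hd⟩ := hct (c (i + 1)) (G.rev (c i)) hsrcf
    have htsrc : G.src (C.t (c (i + 1)) (G.rev (c i))) = p (i + 1 + 1) := by
      rw [C.src_t _ _ hsrcf, hdst]
    have ht2 := two_edges (p (i + 1 + 1)) (G.rev (c (i + 1))) (c (i + 1 + 1))
      (C.t (c (i + 1)) (G.rev (c i))) (rev_src (i + 1)) (hsrc (i + 1 + 1)) htsrc
      (noback' (i + 1))
    have htne : C.t (c (i + 1)) (G.rev (c i)) ≠ G.rev (c (i + 1)) := by
      intro h
      have := tinj (c (i + 1)) (G.rev (c i)) (c (i + 1)) hsrcf rfl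
        (by rw [h, ← C.t_self (c (i + 1))])
      exact noback i this.symm
    have htv := ht2.resolve_left htne
    refine ⟨d, ?_⟩
    rw [← htv, hd, hrevα]
  -- nonvanishing determinant
  have hindep2 : ∀ i, det2 (α (c i)) (α (c (i + 1))) ≠ 0 := by
    intro i
    have h := hindep (G.rev (c i)) (c (i + 1)) (by rw [hsrc, rev_src]) (noback' i)
    rw [hrevα] at h
    have h' : Indep (α (c i)) (α (c (i + 1))) := by
      intro cc dd hcd
      have := h (-cc) dd (by rw [neg_smul, smul_neg, neg_neg]; exact hcd)
      exact ⟨neg_eq_zero.1 this.1, this.2⟩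
    exact indep_det2 h'
  -- the determinant is constant along the cycle
  have hDstep : ∀ i, det2 (α (c (i + 1))) (α (c (i + 1 + 1)))
      = det2 (α (c i)) (α (c (i + 1))) := by
    intro i
    obtain ⟨d, hd⟩ := hstep i
    rw [hd]
    simp only [det2, Pi.add_apply, Pi.neg_apply, Pi.smul_apply, smul_eq_mul]
    ring
  have hDconst : ∀ i, det2 (α (c i)) (α (c (i + 1)))
      = det2 (α (c 0)) (α (c (0 + 1))) := by
    have key : ∀ k : ℕ, det2 (α (c (k : ZMod nn))) (α (c ((k : ZMod nn) + 1)))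
        = det2 (α (c 0)) (α (c (0 + 1))) := by
      intro k
      induction k with
      | zero => simp
      | succ k ih =>
        have hcast : ((k + 1 : ℕ) : ZMod nn) = (k : ZMod nn) + 1 := by push_cast; ring
        rw [hcast, hDstep (k : ZMod nn), ih]
    intro i
    have hi : ((i.val : ℕ) : ZMod nn) = i := by rw [ZMod.natCast_val, ZMod.cast_id]
    rw [← hi]
    exact key i.val
  have hw0 : ∀ i, toC (α (c i)) ≠ 0 := fun i => toC_ne_zero_of_det2_left (hindep2 i)
  have hsq : ∀ i, 0 < Complex.normSq (toC (α (c i))) := fun i => by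
    rw [Complex.normSq_pos]; exact hw0 i
  have him : ∀ i, (toC (α (c (i + 1))) / toC (α (c i))).im
      = (det2 (α (c i)) (α (c (i + 1))) : ℝ) / Complex.normSq (toC (α (c i))) := by
    intro i
    rw [cross_div_im, cross_toC]
  constructor
  · rcases (hindep2 0).lt_or_gt with hneg | hpos
    · refine Or.inr fun i => ?_
      refine angTo_false_mem ?_
      rw [him i]
      refine div_neg_of_neg_of_pos ?_ (hsq i)
      have : det2 (α (c i)) (α (c (i + 1))) < 0 := by rw [hDconst i]; exact hneg
      exact_mod_cast this
    · refine Or.inl fun i => ?_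
      refine angTo_true_mem ?_
      rw [him i]
      refine div_pos ?_ (hsq i)
      have : 0 < det2 (α (c i)) (α (c (i + 1))) := by rw [hDconst i]; exact hpos
      exact_mod_cast this
  · intro ε hpref ε'
    unfold winding
    refine mul_le_mul_of_nonneg_left ?_ (by positivity)
    refine Finset.sum_le_sum fun i _ => ?_
    rcases hpref with ⟨hε, hall⟩ | ⟨hε, hall⟩
    · subst hε
      exact abs_angTo_true_le (hall i) ε'
    · subst hε
      exact abs_angTo_false_le (hall i) ε'


end GKMPaper
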